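/- Let G be a connected graph with a maximal subtree T, and let p₀ be a fixed vertex. In the maximal fundamental C*-algebra of a graph of C*-algebras with respect to T, the linear span of A_{p₀} together with all elements of the form a₀ u_{e₁} ⋯ u_{eₙ} aₙ, where (e₁,…,eₙ) is a path in G from p₀ to p₀, a₀ ∈ A_{p₀} and aᵢ ∈ A_{r(eᵢ)}, is a dense *-subalgebra. -/

import Mathlib

/-! Graphs in the sense of Serre. -/
structure SerreGraph where
  V : Type
  E : Type
  src : E → V
  bar : E → E
  bar_bar : ∀ e, bar (bar e) = e
  bar_ne : ∀ e, bar e ≠ e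

namespace SerreGraph
variable (G : SerreGraph)

/-- The range (target) of an edge. -/
def rng (e : G.E) : G.V := G.src (G.bar e)

/-- `IsPath p l q` : the list of edges `l` is a path from `p` to `q`. -/
inductive IsPath : G.V → List G.E → G.V → Prop
  | nil (p : G.V) : IsPath p [] p
  | cons {q : G.V} (e : G.E) {l : List G.E} (h : IsPath (G.rng e) l q) :
      IsPath (G.src e) (e :: l) q

def Connected : Prop := ∀ p q : G.V, ∃ l, G.IsPath p l q

/-- A path without backtracking. -/
def NoBacktrack (l : List G.E) : Prop := l.Chain' fun e f => f ≠ G.bar e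

/-- `T` (a set of edges, closed under reversal) is a maximal subtree of `G`:
between any two vertices there is a unique geodesic (non-backtracking) path with
all edges in `T`. -/
structure IsMaximalSubtree (T : Set G.E) : Prop where
  bar_mem : ∀ e ∈ T, G.bar e ∈ T
  geodesic : ∀ p q : G.V, ∃! l : List G.E,
    G.IsPath p l q ∧ (∀ e ∈ l, e ∈ T) ∧ G.NoBacktrack l

end SerreGraph

/-- The element `a₀ u_{e₁} a₁ ⋯ u_{eₙ} aₙ` of `P` associated to a vertex `p₀`, a
coefficient `a₀ ∈ A_{p₀}` and a list of pairs `(eᵢ, aᵢ)` with `aᵢ ∈ A_{r(eᵢ)}`. -/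
noncomputable def pathWord {G : SerreGraph} (A : G.V → Type) [∀ q, CStarAlgebra (A q)]
    {P : Type} [CStarAlgebra P] (ι : ∀ q, A q →⋆ₐ[ℂ] P) (u : G.E → P)
    (p₀ : G.V) (a₀ : A p₀) (l : List (Σ e : G.E, A (G.rng e))) : P :=
  ι p₀ a₀ * (l.map fun x => u x.1 * ι (G.rng x.1) x.2).prod

namespace Stmt0Aux

lemma isPath_nil_eq {G : SerreGraph} {p q : G.V} (h : G.IsPath p [] q) : p = q := by
  cases h; rfl

lemma isPath_cons' {G : SerreGraph} {p q : G.V} {e : G.E} {l : List G.E}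
    (h : G.IsPath p (e :: l) q) : p = G.src e ∧ G.IsPath (G.rng e) l q := by
  cases h with
  | cons _ h' => exact ⟨rfl, h'⟩

lemma isPath_append {G : SerreGraph} {p q r : G.V} {l₁ l₂ : List G.E}
    (h₁ : G.IsPath p l₁ q) (h₂ : G.IsPath q l₂ r) : G.IsPath p (l₁ ++ l₂) r := by
  induction h₁ with
  | nil _ => exact h₂
  | cons e _ ih => exact SerreGraph.IsPath.cons e (ih h₂)

section

variable {G : SerreGraph} {A : G.V → Type} [∀ q, CStarAlgebra (A q)]
    {P : Type} [CStarAlgebra P]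

/-- The factor `u_e a` associated to one letter of a path word. -/
noncomputable def wordF (ι : ∀ q, A q →⋆ₐ[ℂ] P) (u : G.E → P)
    (x : Σ e : G.E, A (G.rng e)) : P :=
  u x.1 * ι (G.rng x.1) x.2

lemma pathWord_eq (ι : ∀ q, A q →⋆ₐ[ℂ] P) (u : G.E → P) (p₀ : G.V) (a₀ : A p₀)
    (l : List (Σ e : G.E, A (G.rng e))) :
    pathWord A ι u p₀ a₀ l = ι p₀ a₀ * (l.map (wordF ι u)).prod := rfl

lemma map_fst_mk (l : List G.E) :
    ((l.map fun e => (⟨e, (1 : A (G.rng e))⟩ : Σ e : G.E, A (G.rng e))).map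
      Sigma.fst) = l := by
  induction l with
  | nil => rfl
  | cons e l ih => simpa using ih

variable (ι : ∀ q, A q →⋆ₐ[ℂ] P) (u : G.E → P) {T : Set G.E}

lemma tree_prod (hu_tree : ∀ e ∈ T, u e = 1) :
    ∀ l : List G.E, (∀ e ∈ l, e ∈ T) →
      (((l.map fun e => (⟨e, (1 : A (G.rng e))⟩ : Σ e : G.E, A (G.rng e))).map
        (wordF ι u)).prod) = 1 := by
  intro l
  induction l with
  | nil => intro _; simp
  | cons e l ih =>
    intro hl
    simp only [List.map_cons, List.prod_cons]
    rw [ih (fun x hx => hl x (List.mem_cons_of_mem _ hx)), mul_one]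
    simp [wordF, hu_tree e (hl e List.mem_cons_self)]

lemma tree_word (hu_tree : ∀ e ∈ T, u e = 1) :
    ∀ l : List G.E, l ≠ [] → ∀ p q : G.V, G.IsPath p l q → (∀ e ∈ l, e ∈ T) →
      ∀ a : A q, ∃ L : List (Σ e : G.E, A (G.rng e)), L.map Sigma.fst = l ∧
        ((L.map (wordF ι u)).prod) = ι q a := by
  intro l
  induction l with
  | nil => simp
  | cons e l ih =>
    intro _ p q hpq hlT a
    obtain ⟨-, h'⟩ := isPath_cons' hpq
    have he : u e = 1 := hu_tree e (hlT e List.mem_cons_self)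
    cases l with
    | nil =>
      have heq : G.rng e = q := isPath_nil_eq h'
      subst heq
      exact ⟨[⟨e, a⟩], by simp, by simp [wordF, he]⟩
    | cons e' l' =>
      obtain ⟨L, hm, hp⟩ := ih (by simp) (G.rng e) q h'
        (fun x hx => hlT x (List.mem_cons_of_mem _ hx)) a
      refine ⟨⟨e, 1⟩ :: L, by simp [hm], ?_⟩
      rw [List.map_cons, List.prod_cons, hp]
      simp [wordF, he]

lemma merge_word (p₀ : G.V) :
    ∀ L : List (Σ e : G.E, A (G.rng e)), L ≠ [] →
      ∀ q : G.V, G.IsPath q (L.map Sigma.fst) p₀ → ∀ c : A p₀,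
      ∃ L' : List (Σ e : G.E, A (G.rng e)),
        L'.map Sigma.fst = L.map Sigma.fst ∧
        ((L.map (wordF ι u)).prod) * ι p₀ c = ((L'.map (wordF ι u)).prod) := by
  intro L
  induction L with
  | nil => simp
  | cons x L ih =>
    intro _ q hpath c
    rw [List.map_cons] at hpath
    obtain ⟨-, h'⟩ := isPath_cons' hpath
    cases L with
    | nil =>
      have heq : G.rng x.1 = p₀ := isPath_nil_eq h'
      subst heq
      refine ⟨[⟨x.1, x.2 * c⟩], by simp, ?_⟩
      simp [wordF, map_mul, mul_assoc]
    | cons y L' =>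
      obtain ⟨L'', hm, hp⟩ := ih (by simp) (G.rng x.1) h' c
      refine ⟨x :: L'', by simp [hm], ?_⟩
      rw [List.map_cons, List.prod_cons, mul_assoc, hp, List.map_cons, List.prod_cons]

end

end Stmt0Aux

/-- In the maximal fundamental C*-algebra of a graph of C*-algebras
(a C*-algebra `P` generated by the vertex algebras `A_q` and unitaries `u_e`
satisfying the defining relations, with `u_e = 1` on a maximal subtree `T`),
the linear span of `A_{p₀}` and of the elements `a₀ u_{e₁} a₁ ⋯ u_{eₙ} aₙ`
indexed by loops at `p₀` is a dense *-subalgebra. -/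
theorem stmt0 (G : SerreGraph) (hconn : G.Connected)
    (A : G.V → Type) [∀ q, CStarAlgebra (A q)]
    (B : G.E → Type) [∀ e, CStarAlgebra (B e)]
    (σ : ∀ e, B e ≃⋆ₐ[ℂ] B (G.bar e))
    (s : ∀ e, B e →⋆ₐ[ℂ] A (G.src e))
    (hs : ∀ e, Function.Injective (s e))
    (T : Set G.E) (hT : G.IsMaximalSubtree T)
    (P : Type) [CStarAlgebra P]
    (ι : ∀ q, A q →⋆ₐ[ℂ] P) (u : G.E → P)
    (hu_unitary : ∀ e, u e ∈ unitary P)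
    (hu_star : ∀ e, u (G.bar e) = star (u e))
    (hu_rel : ∀ e (b : B e),
      star (u e) * ι (G.src e) (s e b) * u e = ι (G.rng e) (s (G.bar e) (σ e b)))
    (hu_tree : ∀ e ∈ T, u e = 1)
    (hgen : (StarAlgebra.adjoin ℂ
        ({x : P | ∃ q a, x = ι q a} ∪ {x : P | ∃ e, x = u e})).topologicalClosure = ⊤)
    (p₀ : G.V) :
    letI W : Set P := {x : P | ∃ (a₀ : A p₀) (l : List (Σ e : G.E, A (G.rng e))),
      G.IsPath p₀ (l.map Sigma.fst) p₀ ∧ x = pathWord A ι u p₀ a₀ l}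
    Dense (↑(Submodule.span ℂ W) : Set P) ∧
      (∀ x ∈ Submodule.span ℂ W, star x ∈ Submodule.span ℂ W) ∧
      (∀ x ∈ Submodule.span ℂ W, ∀ y ∈ Submodule.span ℂ W,
        x * y ∈ Submodule.span ℂ W) ∧
      (1 : P) ∈ Submodule.span ℂ W := by
  set W : Set P := {x : P | ∃ (a₀ : A p₀) (l : List (Σ e : G.E, A (G.rng e))),
      G.IsPath p₀ (l.map Sigma.fst) p₀ ∧ x = pathWord A ι u p₀ a₀ l} with hW
  have hWmem : ∀ (a₀ : A p₀) (L : List (Σ e : G.E, A (G.rng e))),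
      G.IsPath p₀ (L.map Sigma.fst) p₀ → pathWord A ι u p₀ a₀ L ∈ W :=
    fun a₀ L h => ⟨a₀, L, h, rfl⟩
  -- `1` is a path word
  have hone : (1 : P) ∈ W := by
    have h1 : pathWord A ι u p₀ 1 [] = 1 := by
      simp [pathWord]
    exact h1 ▸ hWmem 1 [] (SerreGraph.IsPath.nil p₀)
  -- the images of the vertex algebras are path words
  have hgenι : ∀ (q : G.V) (a : A q), ι q a ∈ W := by
    intro q a
    obtain ⟨l₁, ⟨h₁, h₁T, -⟩, -⟩ := hT.geodesic p₀ q
    obtain ⟨l₂, ⟨h₂, h₂T, -⟩, -⟩ := hT.geodesic q p₀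
    cases l₁ with
    | nil =>
      have heq : p₀ = q := Stmt0Aux.isPath_nil_eq h₁
      subst heq
      have h1 : pathWord A ι u p₀ a [] = ι p₀ a := by simp [pathWord]
      exact h1 ▸ hWmem a [] (SerreGraph.IsPath.nil p₀)
    | cons e l₁' =>
      obtain ⟨L₁, hm, hp⟩ :=
        Stmt0Aux.tree_word ι u hu_tree (e :: l₁') (by simp) p₀ q h₁ h₁T a
      refine ⟨1, L₁ ++ l₂.map (fun e => ⟨e, 1⟩), ?_, ?_⟩
      · rw [List.map_append, hm, Stmt0Aux.map_fst_mk]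
        exact Stmt0Aux.isPath_append h₁ h₂
      · rw [Stmt0Aux.pathWord_eq, map_one, one_mul, List.map_append, List.prod_append,
          hp, Stmt0Aux.tree_prod ι u hu_tree l₂ h₂T, mul_one]
  -- the unitaries are path words
  have hgenu : ∀ e : G.E, u e ∈ W := by
    intro e
    obtain ⟨l₁, ⟨h₁, h₁T, -⟩, -⟩ := hT.geodesic p₀ (G.src e)
    obtain ⟨l₂, ⟨h₂, h₂T, -⟩, -⟩ := hT.geodesic (G.rng e) p₀
    refine ⟨1, l₁.map (fun e => ⟨e, 1⟩) ++ ⟨e, 1⟩ :: l₂.map (fun e => ⟨e, 1⟩), ?_, ?_⟩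
    · rw [List.map_append, Stmt0Aux.map_fst_mk, List.map_cons, Stmt0Aux.map_fst_mk]
      exact Stmt0Aux.isPath_append h₁ (SerreGraph.IsPath.cons e h₂)
    · rw [Stmt0Aux.pathWord_eq, map_one, one_mul, List.map_append, List.prod_append,
        Stmt0Aux.tree_prod ι u hu_tree l₁ h₁T, one_mul, List.map_cons, List.prod_cons,
        Stmt0Aux.tree_prod ι u hu_tree l₂ h₂T, mul_one]
      simp [Stmt0Aux.wordF]
  -- products of path words are path words
  have hWmul : ∀ w₁ ∈ W, ∀ w₂ ∈ W, w₁ * w₂ ∈ W := by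
    rintro _ ⟨a₀, L₁, hP₁, rfl⟩ _ ⟨b₀, L₂, hP₂, rfl⟩
    cases L₁ with
    | nil =>
      have h1 : pathWord A ι u p₀ a₀ [] * pathWord A ι u p₀ b₀ L₂
          = pathWord A ι u p₀ (a₀ * b₀) L₂ := by
        simp [Stmt0Aux.pathWord_eq, map_mul, mul_assoc]
      exact h1 ▸ hWmem (a₀ * b₀) L₂ hP₂
    | cons x L₁' =>
      obtain ⟨L₁'', hm, hp⟩ :=
        Stmt0Aux.merge_word ι u p₀ (x :: L₁') (by simp) p₀ hP₁ b₀
      refine ⟨a₀, L₁'' ++ L₂, ?_, ?_⟩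
      · rw [List.map_append, hm]
        exact Stmt0Aux.isPath_append hP₁ hP₂
      · rw [Stmt0Aux.pathWord_eq, Stmt0Aux.pathWord_eq, Stmt0Aux.pathWord_eq,
          List.map_append, List.prod_append, ← hp]
        simp only [mul_assoc]
  -- the span is closed under multiplication
  have hMmul : ∀ x ∈ Submodule.span ℂ W, ∀ y ∈ Submodule.span ℂ W,
      x * y ∈ Submodule.span ℂ W := by
    intro x hx
    induction hx using Submodule.span_induction with
    | mem w hw =>
      intro y hy
      induction hy using Submodule.span_induction with
      | mem v hv => exact Submodule.subset_span (hWmul w hw v hv)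
      | zero => simpa using (Submodule.span ℂ W).zero_mem
      | add y z _ _ ihy ihz => rw [mul_add]; exact add_mem ihy ihz
      | smul c y _ ihy => rw [mul_smul_comm]; exact Submodule.smul_mem _ c ihy
    | zero => intro y hy; simpa using (Submodule.span ℂ W).zero_mem
    | add x z _ _ ihx ihz => intro y hy; rw [add_mul]; exact add_mem (ihx y hy) (ihz y hy)
    | smul c x _ ihx => intro y hy; rw [smul_mul_assoc]; exact Submodule.smul_mem _ c (ihx y hy)
  -- the span is closed under star
  have hstar : ∀ x ∈ Submodule.span ℂ W, star x ∈ Submodule.span ℂ W := by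
    have hprodstar : ∀ L : List (Σ e : G.E, A (G.rng e)),
        star ((L.map (Stmt0Aux.wordF ι u)).prod) ∈ Submodule.span ℂ W := by
      intro L
      induction L with
      | nil => simpa using Submodule.subset_span hone
      | cons x L ih =>
        rw [List.map_cons, List.prod_cons, star_mul]
        have h1 : star (Stmt0Aux.wordF ι u x)
            = ι (G.rng x.1) (star x.2) * u (G.bar x.1) := by
          rw [Stmt0Aux.wordF, star_mul, map_star, ← hu_star]
        rw [h1, ← mul_assoc]
        exact hMmul _ (hMmul _ ih _ (Submodule.subset_span (hgenι _ _))) _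
          (Submodule.subset_span (hgenu _))
    intro x hx
    induction hx using Submodule.span_induction with
    | mem w hw =>
      obtain ⟨a₀, L, hP, rfl⟩ := hw
      rw [Stmt0Aux.pathWord_eq, star_mul, ← map_star]
      exact hMmul _ (hprodstar L) _ (Submodule.subset_span (hgenι p₀ (star a₀)))
    | zero => simpa using (Submodule.span ℂ W).zero_mem
    | add x y _ _ ihx ihy => rw [star_add]; exact add_mem ihx ihy
    | smul c x _ ihx => rw [star_smul]; exact Submodule.smul_mem _ _ ihx
  -- density
  refine ⟨?_, hstar, hMmul, Submodule.subset_span hone⟩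
  let S : StarSubalgebra ℂ P :=
    { (Submodule.span ℂ W).toSubalgebra (Submodule.subset_span hone)
        (fun x y hx hy => hMmul x hx y hy) with
      star_mem' := fun hx => hstar _ hx }
  have hle : StarAlgebra.adjoin ℂ
      ({x : P | ∃ q a, x = ι q a} ∪ {x : P | ∃ e, x = u e}) ≤ S := by
    apply StarAlgebra.adjoin_le
    rintro x (⟨q, a, rfl⟩ | ⟨e, rfl⟩)
    · exact Submodule.subset_span (hgenι q a)
    · exact Submodule.subset_span (hgenu e)
  have h1 : closure ((StarAlgebra.adjoin ℂ
      ({x : P | ∃ q a, x = ι q a} ∪ {x : P | ∃ e, x = u e}) : StarSubalgebra ℂ P) :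
        Set P) = Set.univ := by
    have h2 := congrArg
      (fun (S : StarSubalgebra ℂ P) => (S : Set P)) hgen
    simpa [StarSubalgebra.topologicalClosure_coe] using h2
  rw [dense_iff_closure_eq]
  apply Set.eq_univ_of_univ_subset
  rw [← h1]
  exact closure_mono fun x hx => hle hx
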